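/- arXiv:2107.03877 — 2 statements merged into one kernel-verified Lean document; each statement's English description precedes it below -/
import Mathlib

section
/- Let E be a finite-dimensional real inner product space, X ⊆ E, let (x_k) be a sequence in X converging to x ∈ X, and let f : E → ℝ be continuously differentiable. Then (x, (x_k), f) is an apocalypse on X — i.e. s(−∇f(x_k), T_{x_k}X) → 0 while s(−∇f(x), T_xX) > 0 — if and only if −∇f(x) ∈ (limsup_k T_{x_k}X)° \ (T_xX)°. -/
open Filter Topology

/-- The Bouligand tangent cone of `X ⊆ E` at `x`. -/
def bTangentCone {E : Type*} [NormedAddCommGroup E] [NormedSpace ℝ E]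
    (X : Set E) (x : E) : Set E :=
  {v | ∃ (xk : ℕ → E) (τ : ℕ → ℝ), (∀ k, xk k ∈ X) ∧ (∀ k, 0 < τ k) ∧
    Tendsto τ atTop (𝓝 0) ∧ Tendsto (fun k => (τ k)⁻¹ • (xk k - x)) atTop (𝓝 v)}

/-- The polar of a set `K ⊆ E`: `K° = {w : ⟪w, z⟫ ≤ 0 for all z ∈ K}`. -/
def polarCone {E : Type*} [NormedAddCommGroup E] [InnerProductSpace ℝ E] (K : Set E) : Set E :=
  {w | ∀ z ∈ K, (inner ℝ w z : ℝ) ≤ 0}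

/-- The stationarity measure `s(v, K) = max(0, sup{⟪v, z⟫ : z ∈ K, ‖z‖ = 1})`; note that on `ℝ`,
Lean's `sSup` of the empty set is `0`, matching the convention `sup ∅ = 0`. -/
noncomputable def statMeasure {E : Type*} [NormedAddCommGroup E] [InnerProductSpace ℝ E]
    (v : E) (K : Set E) : ℝ :=
  max 0 (sSup {t : ℝ | ∃ z ∈ K, ‖z‖ = 1 ∧ (inner ℝ v z : ℝ) = t})

/-- The outer limit `limsup_k S_k`: points `u` for which there are a strictly increasing sequence
of indices `(k_i)` and points `u_i ∈ S_{k_i}` with `u_i → u`. -/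
def outerLimit {E : Type*} [NormedAddCommGroup E] (S : ℕ → Set E) : Set E :=
  {u | ∃ φ : ℕ → ℕ, StrictMono φ ∧
    ∃ uk : ℕ → E, (∀ i, uk i ∈ S (φ i)) ∧ Tendsto uk atTop (𝓝 u)}

lemma bTangentCone_smul {E : Type*} [NormedAddCommGroup E] [NormedSpace ℝ E]
    {X : Set E} {x : E} {z : E} (hz : z ∈ bTangentCone X x) {c : ℝ} (hc : 0 < c) :
    c • z ∈ bTangentCone X x := by
  obtain ⟨xk, τ, hX, hτ, hτ0, hv⟩ := hz
  refine ⟨xk, fun k => c⁻¹ * τ k, hX, fun k => mul_pos (inv_pos.2 hc) (hτ k), ?_, ?_⟩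
  · simpa using hτ0.const_mul c⁻¹
  · have : Tendsto (fun k => c • ((τ k)⁻¹ • (xk k - x))) atTop (𝓝 (c • z)) := hv.const_smul c
    convert this using 2 with k
    rw [mul_inv, inv_inv, mul_smul]

lemma grad_cont {E : Type*} [NormedAddCommGroup E] [InnerProductSpace ℝ E] [FiniteDimensional ℝ E]
    (f : E → ℝ) (hf : ContDiff ℝ 1 f) : Continuous (gradient f) :=
  (InnerProductSpace.toDual ℝ E).symm.continuous.comp (hf.continuous_fderiv one_ne_zero)

section SM
variable {E : Type*} [NormedAddCommGroup E] [InnerProductSpace ℝ E] {v : E} {K : Set E}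

lemma sm_bdd : BddAbove {t : ℝ | ∃ z ∈ K, ‖z‖ = 1 ∧ (inner ℝ v z : ℝ) = t} := by
  refine ⟨‖v‖, fun t ht => ?_⟩
  obtain ⟨z, _, hz1, rfl⟩ := ht
  calc (inner ℝ v z : ℝ) ≤ ‖v‖ * ‖z‖ := real_inner_le_norm v z
  _ = ‖v‖ := by rw [hz1, mul_one]

lemma sm_nonneg : 0 ≤ statMeasure v K := le_max_left _ _

lemma inner_le_sm {z : E} (hz : z ∈ K) (hz1 : ‖z‖ = 1) : (inner ℝ v z : ℝ) ≤ statMeasure v K :=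
  le_trans (le_csSup sm_bdd ⟨z, hz, hz1, rfl⟩) (le_max_right _ _)

lemma sm_eq_zero_of_polar (hv : v ∈ polarCone K) : statMeasure v K = 0 := by
  rw [statMeasure, max_eq_left]
  exact Real.sSup_le (fun t ⟨z, hzK, _, ht⟩ => ht ▸ hv z hzK) le_rfl

lemma sm_lt_elim {c : ℝ} (hc : 0 ≤ c) (h : c < statMeasure v K) :
    ∃ z ∈ K, ‖z‖ = 1 ∧ c < (inner ℝ v z : ℝ) := by
  rw [statMeasure] at h
  have hS : c < sSup {t : ℝ | ∃ z ∈ K, ‖z‖ = 1 ∧ (inner ℝ v z : ℝ) = t} := by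
    rcases lt_max_iff.mp h with h' | h'
    · exact absurd h' (not_lt.2 hc)
    · exact h'
  have hne : {t : ℝ | ∃ z ∈ K, ‖z‖ = 1 ∧ (inner ℝ v z : ℝ) = t}.Nonempty := by
    rw [Set.nonempty_iff_ne_empty]
    intro he
    rw [he, Real.sSup_empty] at hS
    exact absurd hS (not_lt.2 hc)
  obtain ⟨t, ⟨z, hzK, hz1, rfl⟩, ht⟩ := exists_lt_of_lt_csSup hne hS
  exact ⟨z, hzK, hz1, ht⟩

end SM

lemma sm_pos_of_not_polar {E : Type*} [NormedAddCommGroup E] [InnerProductSpace ℝ E]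
    {v : E} {X : Set E} {x : E} (h : v ∉ polarCone (bTangentCone X x)) :
    0 < statMeasure v (bTangentCone X x) := by
  simp only [polarCone, Set.mem_setOf_eq, not_forall] at h
  obtain ⟨z, hzT, hzi⟩ := h
  push_neg at hzi
  have hz0 : z ≠ 0 := by
    rintro rfl; simp at hzi
  have hnz : (0:ℝ) < ‖z‖ := norm_pos_iff.2 hz0
  have hzT' : ‖z‖⁻¹ • z ∈ bTangentCone X x := bTangentCone_smul hzT (inv_pos.2 hnz)
  have h1 : ‖‖z‖⁻¹ • z‖ = 1 := by
    rw [norm_smul, norm_inv, norm_norm, inv_mul_cancel₀ (ne_of_gt hnz)]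
  have h2 : (0:ℝ) < inner ℝ v (‖z‖⁻¹ • z) := by
    rw [real_inner_smul_right]
    exact mul_pos (inv_pos.2 hnz) hzi
  exact lt_of_lt_of_le h2 (inner_le_sm hzT' h1)


/-- Let `E` be a finite-dimensional real inner product space, `X ⊆ E`, `(x_k)` a
sequence in `X` converging to `x ∈ X`, and `f : E → ℝ` continuously differentiable. Then
`(x, (x_k), f)` is an apocalypse on `X` — i.e. `s(−∇f(x_k), T_{x_k}X) → 0` while
`s(−∇f(x), T_xX) > 0` — if and only if `−∇f(x) ∈ (limsup_k T_{x_k}X)° \ (T_xX)°`. -/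
theorem stmt8 {E : Type*} [NormedAddCommGroup E] [InnerProductSpace ℝ E] [FiniteDimensional ℝ E]
    (X : Set E) (x : E) (hx : x ∈ X) (xk : ℕ → E) (hxk : ∀ k, xk k ∈ X)
    (hlim : Tendsto xk atTop (𝓝 x)) (f : E → ℝ) (hf : ContDiff ℝ 1 f) :
    (Tendsto (fun k => statMeasure (-gradient f (xk k)) (bTangentCone X (xk k))) atTop (𝓝 0) ∧
      0 < statMeasure (-gradient f x) (bTangentCone X x)) ↔
    -gradient f x ∈
      polarCone (outerLimit fun k => bTangentCone X (xk k)) \ polarCone (bTangentCone X x) := by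
  have hgc : Continuous (gradient f) := grad_cont f hf
  constructor
  · rintro ⟨htend, hpos⟩
    constructor
    · -- in polar of outer limit
      intro u hu
      obtain ⟨φ, hφ, uk, hukmem, huk⟩ := hu
      rcases eq_or_ne u 0 with rfl | hu0
      · simp
      · have hnu : (0:ℝ) < ‖u‖ := norm_pos_iff.2 hu0
        -- eventually uk i ≠ 0
        have hnorm : Tendsto (fun i => ‖uk i‖) atTop (𝓝 ‖u‖) := huk.norm
        have hev : ∀ᶠ i in atTop, (0:ℝ) < ‖uk i‖ :=
          hnorm.eventually (eventually_gt_nhds hnu)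
        -- gradient along subsequence
        have hgr : Tendsto (fun i => -gradient f (xk (φ i))) atTop (𝓝 (-gradient f x)) :=
          ((hgc.tendsto x).comp (hlim.comp hφ.tendsto_atTop)).neg
        have hg : Tendsto (fun i => (‖uk i‖)⁻¹ * (inner ℝ (-gradient f (xk (φ i))) (uk i) : ℝ))
            atTop (𝓝 ((‖u‖)⁻¹ * (inner ℝ (-gradient f x) u : ℝ))) :=
          (hnorm.inv₀ (ne_of_gt hnu)).mul (hgr.inner huk)
        have hs : Tendsto (fun i => statMeasure (-gradient f (xk (φ i)))
            (bTangentCone X (xk (φ i)))) atTop (𝓝 0) := htend.comp hφ.tendsto_atTop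
        have hle : (‖u‖)⁻¹ * (inner ℝ (-gradient f x) u : ℝ) ≤ 0 := by
          refine le_of_tendsto_of_tendsto hg hs ?_
          filter_upwards [hev] with i hi
          have hmem : (‖uk i‖)⁻¹ • uk i ∈ bTangentCone X (xk (φ i)) :=
            bTangentCone_smul (hukmem i) (inv_pos.2 hi)
          have h1 : ‖(‖uk i‖)⁻¹ • uk i‖ = 1 := by
            rw [norm_smul, norm_inv, norm_norm, inv_mul_cancel₀ (ne_of_gt hi)]
          have := inner_le_sm (v := -gradient f (xk (φ i))) hmem h1
          rwa [real_inner_smul_right] at this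
        nlinarith [inv_pos.2 hnu]
    · -- not in polar of T_x
      intro hpol
      obtain ⟨z, hzT, hz1, hzi⟩ := sm_lt_elim le_rfl hpos
      exact absurd (hpol z hzT) (not_le.2 hzi)
  · rintro ⟨hpolout, hnpol⟩
    refine ⟨?_, sm_pos_of_not_polar hnpol⟩
    by_contra hN
    rw [Metric.tendsto_atTop] at hN
    push_neg at hN
    obtain ⟨ε, hε, hfreq⟩ := hN
    have hfreq' : ∃ᶠ n in atTop, ε ≤ statMeasure (-gradient f (xk n)) (bTangentCone X (xk n)) := by
      rw [frequently_atTop]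
      intro N
      obtain ⟨n, hn, hd⟩ := hfreq N
      refine ⟨n, hn, ?_⟩
      rwa [Real.dist_eq, sub_zero, abs_of_nonneg sm_nonneg] at hd
    obtain ⟨φ, hφ, hP⟩ := extraction_of_frequently_atTop hfreq'
    have hhalf : ∀ n, ε / 2 < statMeasure (-gradient f (xk (φ n))) (bTangentCone X (xk (φ n))) :=
      fun n => lt_of_lt_of_le (half_lt_self hε) (hP n)
    choose z hzT hz1 hzi using fun n => sm_lt_elim (le_of_lt (half_pos hε)) (hhalf n)
    have hsph : ∀ n, z n ∈ Metric.sphere (0:E) 1 := fun n => by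
      rw [mem_sphere_zero_iff_norm]; exact hz1 n
    obtain ⟨z₀, hz₀, ψ, hψ, hzψ⟩ := (isCompact_sphere (0:E) 1).tendsto_subseq hsph
    have hz₀out : z₀ ∈ outerLimit fun k => bTangentCone X (xk k) :=
      ⟨φ ∘ ψ, hφ.comp hψ, z ∘ ψ, fun i => hzT (ψ i), hzψ⟩
    have hle : (inner ℝ (-gradient f x) z₀ : ℝ) ≤ 0 := hpolout z₀ hz₀out
    have hgr : Tendsto (fun i => -gradient f (xk (φ (ψ i)))) atTop (𝓝 (-gradient f x)) :=
      ((hgc.tendsto x).comp (hlim.comp (hφ.comp hψ).tendsto_atTop)).neg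
    have hin : Tendsto (fun i => (inner ℝ (-gradient f (xk (φ (ψ i)))) (z (ψ i)) : ℝ))
        atTop (𝓝 (inner ℝ (-gradient f x) z₀ : ℝ)) := hgr.inner hzψ
    have hge : ε / 2 ≤ (inner ℝ (-gradient f x) z₀ : ℝ) :=
      ge_of_tendsto hin (Eventually.of_forall fun i => le_of_lt (hzi (ψ i)))
    linarith [half_pos hε]
end

section
/- Let E be a finite-dimensional real inner product space, X ⊆ E, and x ∈ X. Then x is apocalyptic — i.e., there exist a sequence (x_k) in X converging to x and a continuously differentiable f : E → ℝ with s(−∇f(x_k), T_{x_k}X) → 0 and s(−∇f(x), T_xX) > 0 — if and only if there exists a sequence (x_k) in X converging to x such that (limsup_k T_{x_k}X)° is not contained in (T_xX)°. -/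
open Filter Topology

section Helpers

variable {E : Type*} [NormedAddCommGroup E] [InnerProductSpace ℝ E]

lemma statSet_bddAbove (v : E) (K : Set E) :
    BddAbove {t : ℝ | ∃ z ∈ K, ‖z‖ = 1 ∧ (inner ℝ v z : ℝ) = t} := by
  refine ⟨‖v‖, ?_⟩
  rintro t ⟨z, _, hz1, rfl⟩
  calc (inner ℝ v z : ℝ) ≤ ‖v‖ * ‖z‖ := real_inner_le_norm v z
    _ = ‖v‖ := by rw [hz1, mul_one]

lemma statMeasure_nonneg (v : E) (K : Set E) : 0 ≤ statMeasure v K := le_max_left _ _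

lemma inner_le_statMeasure {v z : E} {K : Set E} (hz : z ∈ K) (hz1 : ‖z‖ = 1) :
    (inner ℝ v z : ℝ) ≤ statMeasure v K :=
  le_trans (le_csSup (statSet_bddAbove v K) ⟨z, hz, hz1, rfl⟩) (le_max_right _ _)

lemma exists_of_lt_statMeasure {v : E} {K : Set E} {b : ℝ} (hb : 0 ≤ b)
    (h : b < statMeasure v K) : ∃ z ∈ K, ‖z‖ = 1 ∧ b < (inner ℝ v z : ℝ) := by
  set S := {t : ℝ | ∃ z ∈ K, ‖z‖ = 1 ∧ (inner ℝ v z : ℝ) = t} with hS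
  have hs : b < sSup S := by
    rcases (lt_max_iff.1 h) with h0 | h1
    · exact absurd h0 (not_lt.2 hb)
    · exact h1
  have hne : S.Nonempty := by
    by_contra hne
    rw [Set.not_nonempty_iff_eq_empty] at hne
    rw [hne, Real.sSup_empty] at hs
    exact absurd hs (not_lt.2 hb)
  obtain ⟨t, ht, hbt⟩ := exists_lt_of_lt_csSup hne hs
  obtain ⟨z, hzK, hz1, rfl⟩ := ht
  exact ⟨z, hzK, hz1, hbt⟩

lemma smul_mem_bTangentCone {X : Set E} {y v : E} {c : ℝ} (hc : 0 < c)
    (hv : v ∈ bTangentCone X y) : c • v ∈ bTangentCone X y := by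
  obtain ⟨xk, τ, hX, hτ, hτ0, hlim⟩ := hv
  refine ⟨xk, fun k => c⁻¹ * τ k, hX, fun k => mul_pos (inv_pos.2 hc) (hτ k), ?_, ?_⟩
  · have := hτ0.const_mul c⁻¹
    simpa using this
  · have h1 : Tendsto (fun k => c • ((τ k)⁻¹ • (xk k - y))) atTop (𝓝 (c • v)) :=
      hlim.const_smul c
    refine h1.congr fun k => ?_
    rw [mul_inv, inv_inv, smul_smul]

lemma inner_le_statMeasure_mul_norm {X : Set E} {y v u : E} (hu : u ∈ bTangentCone X y) :
    (inner ℝ v u : ℝ) ≤ statMeasure v (bTangentCone X y) * ‖u‖ := by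
  rcases eq_or_ne u 0 with rfl | hu0
  · simp
  · have hnu : (0:ℝ) < ‖u‖ := norm_pos_iff.2 hu0
    have hz : ‖u‖⁻¹ • u ∈ bTangentCone X y :=
      smul_mem_bTangentCone (inv_pos.2 hnu) hu
    have h1 : ‖‖u‖⁻¹ • u‖ = 1 := by
      rw [norm_smul, norm_inv, norm_norm, inv_mul_cancel₀ (ne_of_gt hnu)]
    have h2 : (inner ℝ v (‖u‖⁻¹ • u) : ℝ) ≤ statMeasure v (bTangentCone X y) :=
      inner_le_statMeasure hz h1
    rw [real_inner_smul_right] at h2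
    calc (inner ℝ v u : ℝ) = ‖u‖ * (‖u‖⁻¹ * inner ℝ v u) := by field_simp
      _ ≤ ‖u‖ * statMeasure v (bTangentCone X y) :=
          mul_le_mul_of_nonneg_left h2 (le_of_lt hnu)
      _ = statMeasure v (bTangentCone X y) * ‖u‖ := mul_comm _ _

/-- If `v_k → w` and the stationarity measures of `v_k` on `T_{x_k}X` tend to `0`, then `w`
lies in the polar of the outer limit of the tangent cones. -/
lemma mem_polar_outerLimit_of_tendsto {X : Set E} {xk : ℕ → E} {v : ℕ → E} {w : E}
    (hv : Tendsto v atTop (𝓝 w))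
    (hs : Tendsto (fun k => statMeasure (v k) (bTangentCone X (xk k))) atTop (𝓝 0)) :
    w ∈ polarCone (outerLimit fun k => bTangentCone X (xk k)) := by
  rintro u ⟨φ, hφ, uk, huk, hul⟩
  have key : ∀ i, (inner ℝ (v (φ i)) (uk i) : ℝ) ≤
      statMeasure (v (φ i)) (bTangentCone X (xk (φ i))) * ‖uk i‖ :=
    fun i => inner_le_statMeasure_mul_norm (huk i)
  have hlhs : Tendsto (fun i => (inner ℝ (v (φ i)) (uk i) : ℝ)) atTop (𝓝 (inner ℝ w u : ℝ)) :=
    (hv.comp hφ.tendsto_atTop).inner hul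
  have hrhs : Tendsto
      (fun i => statMeasure (v (φ i)) (bTangentCone X (xk (φ i))) * ‖uk i‖) atTop
      (𝓝 (0 * ‖u‖)) :=
    (hs.comp hφ.tendsto_atTop).mul hul.norm
  have := le_of_tendsto_of_tendsto' hlhs hrhs key
  simpa using this

end Helpers

section HelpersFD

variable {E : Type*} [NormedAddCommGroup E] [InnerProductSpace ℝ E] [FiniteDimensional ℝ E]

/-- If `w` lies in the polar of the outer limit, the stationarity measures tend to `0`. -/
lemma tendsto_statMeasure_of_mem_polar {X : Set E} {xk : ℕ → E} {w : E}
    (hw : w ∈ polarCone (outerLimit fun k => bTangentCone X (xk k))) :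
    Tendsto (fun k => statMeasure w (bTangentCone X (xk k))) atTop (𝓝 0) := by
  by_contra h
  rw [Metric.tendsto_atTop] at h
  push_neg at h
  obtain ⟨ε, hε, hfreq⟩ := h
  have hfreq' : ∃ᶠ n in atTop, ε ≤ statMeasure w (bTangentCone X (xk n)) := by
    rw [frequently_atTop]
    intro N
    obtain ⟨n, hnN, hdist⟩ := hfreq N
    refine ⟨n, hnN, ?_⟩
    rw [Real.dist_eq, sub_zero, abs_of_nonneg (statMeasure_nonneg _ _)] at hdist
    exact hdist
  obtain ⟨φ, hφ, hφε⟩ := Filter.extraction_of_frequently_atTop hfreq'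
  have hhalf : ∀ i, ∃ z ∈ bTangentCone X (xk (φ i)), ‖z‖ = 1 ∧ ε / 2 < (inner ℝ w z : ℝ) :=
    fun i => exists_of_lt_statMeasure (by linarith) (lt_of_lt_of_le (by linarith) (hφε i))
  choose z hzK hz1 hzw using hhalf
  have hzsph : ∀ i, z i ∈ Metric.sphere (0 : E) 1 := fun i => by
    simpa [mem_sphere_zero_iff_norm] using hz1 i
  obtain ⟨u, _, ψ, hψ, hzu⟩ := (isCompact_sphere (0 : E) 1).tendsto_subseq hzsph
  have huOL : u ∈ outerLimit fun k => bTangentCone X (xk k) :=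
    ⟨φ ∘ ψ, hφ.comp hψ, z ∘ ψ, fun i => hzK (ψ i), hzu⟩
  have h1 : (inner ℝ w u : ℝ) ≤ 0 := hw u huOL
  have h2 : ε / 2 ≤ (inner ℝ w u : ℝ) := by
    have hlim : Tendsto (fun i => (inner ℝ w (z (ψ i)) : ℝ)) atTop (𝓝 (inner ℝ w u : ℝ)) :=
      tendsto_const_nhds.inner hzu
    exact ge_of_tendsto hlim (Eventually.of_forall fun i => le_of_lt (hzw (ψ i)))
  linarith

end HelpersFD

/-- Let `E` be a finite-dimensional real inner ℝ product space, `X ⊆ E`, `x ∈ X`.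
Then `x` is apocalyptic — i.e. there exist a sequence `(x_k)` in `X` converging to `x` and a
continuously differentiable `f : E → ℝ` with `s(−∇f(x_k), T_{x_k}X) → 0` and
`s(−∇f(x), T_xX) > 0` — if and only if there exists a sequence `(x_k)` in `X` converging to `x`
such that `(limsup_k T_{x_k}X)°` is not contained in `(T_xX)°`. -/
theorem stmt9 {E : Type*} [NormedAddCommGroup E] [InnerProductSpace ℝ E] [FiniteDimensional ℝ E]
    (X : Set E) (x : E) (hx : x ∈ X) :
    (∃ (xk : ℕ → E) (f : E → ℝ), (∀ k, xk k ∈ X) ∧ Tendsto xk atTop (𝓝 x) ∧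
      ContDiff ℝ 1 f ∧
      Tendsto (fun k => statMeasure (-gradient f (xk k)) (bTangentCone X (xk k))) atTop (𝓝 0) ∧
      0 < statMeasure (-gradient f x) (bTangentCone X x)) ↔
    (∃ xk : ℕ → E, (∀ k, xk k ∈ X) ∧ Tendsto xk atTop (𝓝 x) ∧
      ¬ polarCone (outerLimit fun k => bTangentCone X (xk k)) ⊆
          polarCone (bTangentCone X x)) := by
  constructor
  · rintro ⟨xk, f, hX, hxk, hf, hs, hpos⟩
    refine ⟨xk, hX, hxk, ?_⟩
    intro hsub
    set w := -gradient f x with hw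
    -- the gradient is continuous
    have hgc : Continuous (fun y => gradient f y) :=
      (InnerProductSpace.toDual ℝ E).symm.continuous.comp (hf.continuous_fderiv one_ne_zero)
    have hv : Tendsto (fun k => -gradient f (xk k)) atTop (𝓝 w) :=
      ((hgc.tendsto x).comp hxk).neg
    have hwpol : w ∈ polarCone (outerLimit fun k => bTangentCone X (xk k)) :=
      mem_polar_outerLimit_of_tendsto hv hs
    have hwpol' : w ∈ polarCone (bTangentCone X x) := hsub hwpol
    obtain ⟨z, hzK, _, hzpos⟩ := exists_of_lt_statMeasure (le_refl 0) hpos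
    exact absurd (hwpol' z hzK) (not_le.2 hzpos)
  · rintro ⟨xk, hX, hxk, hnsub⟩
    rw [Set.not_subset] at hnsub
    obtain ⟨w, hwOL, hwT⟩ := hnsub
    -- take f(y) = ⟪-w, y⟫, so that gradient f = -w, i.e. -∇f = w
    refine ⟨xk, fun y => (inner ℝ (-w) y : ℝ), hX, hxk, ?_, ?_, ?_⟩
    · exact (innerSL ℝ (-w)).contDiff
    · have hgrad : ∀ y : E, gradient (fun y => (inner ℝ (-w) y : ℝ)) y = -w := by
        intro y
        have hfd : HasFDerivAt (fun y => (inner ℝ (-w) y : ℝ))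
            (InnerProductSpace.toDual ℝ E (-w)) y := by
          have h2 : (fun y : E => (inner ℝ (-w) y : ℝ)) =
              ⇑(InnerProductSpace.toDual ℝ E (-w)) := by
            funext y; rw [InnerProductSpace.toDual_apply_apply]
          rw [h2]
          exact (InnerProductSpace.toDual ℝ E (-w)).hasFDerivAt
        exact (hasGradientAt_iff_hasFDerivAt.2 hfd).gradient
      have hconv : Tendsto
          (fun k => statMeasure w (bTangentCone X (xk k))) atTop (𝓝 0) :=
        tendsto_statMeasure_of_mem_polar hwOL
      refine hconv.congr fun k => ?_
      rw [hgrad (xk k), neg_neg]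
    · have hgrad : gradient (fun y => (inner ℝ (-w) y : ℝ)) x = -w := by
        have hfd : HasFDerivAt (fun y : E => (inner ℝ (-w) y : ℝ))
            (InnerProductSpace.toDual ℝ E (-w)) x := by
          have h2 : (fun y : E => (inner ℝ (-w) y : ℝ)) =
              ⇑(InnerProductSpace.toDual ℝ E (-w)) := by
            funext y; rw [InnerProductSpace.toDual_apply_apply]
          rw [h2]
          exact (InnerProductSpace.toDual ℝ E (-w)).hasFDerivAt
        exact (hasGradientAt_iff_hasFDerivAt.2 hfd).gradient
      rw [hgrad, neg_neg]
      -- w ∉ polar(T_x X): there is z ∈ T_x X with ⟪w, z⟫ > 0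
      have : ∃ z ∈ bTangentCone X x, 0 < (inner ℝ w z : ℝ) := by
        by_contra hc
        push_neg at hc
        exact hwT hc
      obtain ⟨z, hzK, hzpos⟩ := this
      have hz0 : z ≠ 0 := by
        rintro rfl; simp at hzpos
      have hnz : (0:ℝ) < ‖z‖ := norm_pos_iff.2 hz0
      have hz' : ‖z‖⁻¹ • z ∈ bTangentCone X x := smul_mem_bTangentCone (inv_pos.2 hnz) hzK
      have h1 : ‖‖z‖⁻¹ • z‖ = 1 := by
        rw [norm_smul, norm_inv, norm_norm, inv_mul_cancel₀ (ne_of_gt hnz)]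
      have h2 : (0:ℝ) < inner ℝ w (‖z‖⁻¹ • z) := by
        rw [real_inner_smul_right]
        positivity
      exact lt_of_lt_of_le h2 (inner_le_statMeasure hz' h1)
end
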